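/- For n ≥ 4 and 0 < ε ≤ 1, the graph F_n (as constructed) satisfies Δ_ε(F_n) = ⌊ n − 1 − ε + ε·⌈(n−1)/2⌉ ⌋, where Δ_ε(G) = ⌊ max over edges uv of ((1−ε)·min{d(u),d(v)} + ε·max{d(u),d(v)}) ⌋. -/
import Mathlib


open SimpleGraph Classical

/-- Chromatic number as a natural number. -/
noncomputable def chromNum {V : Type*} [Fintype V] (G : SimpleGraph V) : ℕ :=
  sInf {n | G.Colorable n}

/-- Degree of a vertex. -/
noncomputable def deg {V : Type*} [Fintype V] (G : SimpleGraph V) (v : V) : ℕ :=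
  (G.neighborSet v).ncard

/-- Maximum degree. -/
noncomputable def maxDeg {V : Type*} [Fintype V] (G : SimpleGraph V) : ℕ :=
  sSup {d | ∃ v, d = deg G v}

/-- Δ₂ : max over edges of the min of the endpoint degrees. -/
noncomputable def delta2 {V : Type*} [Fintype V] (G : SimpleGraph V) : ℕ :=
  sSup {d | ∃ u v, G.Adj u v ∧ d = min (deg G u) (deg G v)}

/-- Ore degree. -/
noncomputable def theta {V : Type*} [Fintype V] (G : SimpleGraph V) : ℕ :=
  sSup {d | ∃ u v, G.Adj u v ∧ d = deg G u + deg G v}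

/-- Vertex-critical graph. -/
noncomputable def critical {V : Type*} [Fintype V] (G : SimpleGraph V) : Prop :=
  ∀ v : V, chromNum (G.induce {u | u ≠ v}) < chromNum G

noncomputable def deltaEps {V : Type*} [Fintype V] (ε : ℝ) (G : SimpleGraph V) : ℕ :=
  ⌊sSup {x : ℝ | ∃ u v, G.Adj u v ∧
      x = (1 - ε) * (min (deg G u) (deg G v) : ℕ) + ε * (max (deg G u) (deg G v) : ℕ)}⌋₊

def FnRel (n : ℕ) : Fin n ⊕ Fin (n - 1) → Fin n ⊕ Fin (n - 1) → Prop
  | Sum.inl i, Sum.inl j => ¬((i : ℕ) = 0 ∧ (j : ℕ) = 1) ∧ ¬((i : ℕ) = 1 ∧ (j : ℕ) = 0)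
  | Sum.inr _, Sum.inr _ => True
  | Sum.inl i, Sum.inr a => ((i : ℕ) = 0 ∧ (a : ℕ) < (n - 1) / 2) ∨ ((i : ℕ) = 1 ∧ (n - 1) / 2 ≤ (a : ℕ))
  | Sum.inr _, Sum.inl _ => False

def Fn (n : ℕ) : SimpleGraph (Fin n ⊕ Fin (n - 1)) := SimpleGraph.fromRel (FnRel n)

lemma adj_ll (n : ℕ) (i j : Fin n) : (Fn n).Adj (Sum.inl i) (Sum.inl j) ↔
    (i:ℕ) ≠ (j:ℕ) ∧ ¬((i:ℕ) = 0 ∧ (j:ℕ) = 1) ∧ ¬((i:ℕ) = 1 ∧ (j:ℕ) = 0) := by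
  simp [Fn, FnRel, SimpleGraph.fromRel_adj, Fin.ext_iff, Sum.inl.injEq]
  tauto

lemma adj_lr (n : ℕ) (i : Fin n) (a : Fin (n-1)) : (Fn n).Adj (Sum.inl i) (Sum.inr a) ↔
    ((i:ℕ) = 0 ∧ (a:ℕ) < (n-1)/2) ∨ ((i:ℕ) = 1 ∧ (n-1)/2 ≤ (a:ℕ)) := by
  simp [Fn, FnRel, SimpleGraph.fromRel_adj]

lemma adj_rr (n : ℕ) (a b : Fin (n-1)) : (Fn n).Adj (Sum.inr a) (Sum.inr b) ↔ a ≠ b := by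
  simp [Fn, FnRel, SimpleGraph.fromRel_adj]

lemma deg_inr (n : ℕ) (hn : 4 ≤ n) (a : Fin (n-1)) : deg (Fn n) (Sum.inr a) = n - 1 := by
  rcases lt_or_ge (a:ℕ) ((n-1)/2) with h | h
  · have : (Fn n).neighborSet (Sum.inr a) =
        ↑((({a}ᶜ : Finset (Fin (n-1))).image Sum.inr) ∪ {Sum.inl (⟨0, by omega⟩ : Fin n)}) := by
      ext u
      cases u with
      | inl i =>
        simp [SimpleGraph.mem_neighborSet, (Fn n).adj_comm, adj_lr, Fin.ext_iff, h]
      | inr b =>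
        simp [SimpleGraph.mem_neighborSet, adj_rr, ne_comm]
    rw [deg, this, Set.ncard_coe_finset, Finset.card_union_of_disjoint (by simp [Finset.disjoint_left]),
      Finset.card_image_of_injective _ Sum.inr_injective, Finset.card_compl]
    simp; omega
  · have : (Fn n).neighborSet (Sum.inr a) =
        ↑((({a}ᶜ : Finset (Fin (n-1))).image Sum.inr) ∪ {Sum.inl (⟨1, by omega⟩ : Fin n)}) := by
      ext u
      cases u with
      | inl i =>
        simp [SimpleGraph.mem_neighborSet, (Fn n).adj_comm, adj_lr, Fin.ext_iff, h]
      | inr b =>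
        simp [SimpleGraph.mem_neighborSet, adj_rr, ne_comm]
    rw [deg, this, Set.ncard_coe_finset, Finset.card_union_of_disjoint (by simp [Finset.disjoint_left]),
      Finset.card_image_of_injective _ Sum.inr_injective, Finset.card_compl]
    simp; omega

lemma deg_inl2 (n : ℕ) (hn : 4 ≤ n) (i : Fin n) (hi : 2 ≤ (i:ℕ)) :
    deg (Fn n) (Sum.inl i) = n - 1 := by
  have : (Fn n).neighborSet (Sum.inl i) = ((({i}ᶜ : Finset (Fin n)).image Sum.inl : Finset (Fin n ⊕ Fin (n-1))) : Set _) := by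
    ext u
    cases u with
    | inl j =>
      simp [SimpleGraph.mem_neighborSet, adj_ll]
      rw [Fin.ext_iff]
      omega
    | inr b =>
      simp [SimpleGraph.mem_neighborSet, adj_lr]
      omega
  rw [deg, this, Set.ncard_coe_finset,
    Finset.card_image_of_injective _ Sum.inl_injective, Finset.card_compl]
  simp

lemma deg_inl0 (n : ℕ) (hn : 4 ≤ n) (i : Fin n) (hi : (i:ℕ) = 0) :
    deg (Fn n) (Sum.inl i) = n - 2 + (n-1)/2 := by
  have : (Fn n).neighborSet (Sum.inl i) =
      ↑((Finset.Ici (⟨2, by omega⟩ : Fin n)).image Sum.inl ∪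
        (Finset.Iio (⟨(n-1)/2, by omega⟩ : Fin (n-1))).image Sum.inr) := by
    ext u
    cases u with
    | inl j =>
      simp [SimpleGraph.mem_neighborSet, adj_ll, hi]
      simp [Fin.le_def]
      omega
    | inr b =>
      simp [SimpleGraph.mem_neighborSet, adj_lr, Fin.lt_def, hi]
  rw [deg, this, Set.ncard_coe_finset, Finset.card_union_of_disjoint (by simp [Finset.disjoint_left]),
    Finset.card_image_of_injective _ Sum.inl_injective,
    Finset.card_image_of_injective _ Sum.inr_injective, Fin.card_Ici, Fin.card_Iio]

lemma deg_inl1 (n : ℕ) (hn : 4 ≤ n) (i : Fin n) (hi : (i:ℕ) = 1) :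
    deg (Fn n) (Sum.inl i) = n - 2 + (n - 1 - (n-1)/2) := by
  have : (Fn n).neighborSet (Sum.inl i) =
      ↑((Finset.Ici (⟨2, by omega⟩ : Fin n)).image Sum.inl ∪
        (Finset.Ici (⟨(n-1)/2, by omega⟩ : Fin (n-1))).image Sum.inr) := by
    ext u
    cases u with
    | inl j =>
      simp [SimpleGraph.mem_neighborSet, adj_ll, hi]
      simp [Fin.le_def]
      omega
    | inr b =>
      simp [SimpleGraph.mem_neighborSet, adj_lr, Fin.le_def, hi]
  rw [deg, this, Set.ncard_coe_finset, Finset.card_union_of_disjoint (by simp [Finset.disjoint_left]),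
    Finset.card_image_of_injective _ Sum.inl_injective,
    Finset.card_image_of_injective _ Sum.inr_injective, Fin.card_Ici, Fin.card_Ici]

lemma deg_le_max (n : ℕ) (hn : 4 ≤ n) (v : Fin n ⊕ Fin (n-1)) :
    deg (Fn n) v ≤ n - 2 + (n - 1 - (n-1)/2) := by
  cases v with
  | inl i =>
    rcases Nat.lt_or_ge (i:ℕ) 2 with h | h
    · interval_cases hiv : (i:ℕ)
      · rw [deg_inl0 n hn i hiv]; omega
      · rw [deg_inl1 n hn i hiv]
    · rw [deg_inl2 n hn i h]; omega
  | inr a => rw [deg_inr n hn a]; omega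

lemma min_deg_le (n : ℕ) (hn : 4 ≤ n) (u v : Fin n ⊕ Fin (n-1)) (h : (Fn n).Adj u v) :
    deg (Fn n) u ≤ n - 1 ∨ deg (Fn n) v ≤ n - 1 := by
  cases u with
  | inr a => left; rw [deg_inr n hn a]
  | inl i =>
    cases v with
    | inr b => right; rw [deg_inr n hn b]
    | inl j =>
      rcases Nat.lt_or_ge (i:ℕ) 2 with hi | hi
      · rcases Nat.lt_or_ge (j:ℕ) 2 with hj | hj
        · exfalso
          rw [adj_ll] at h
          omega
        · right; rw [deg_inl2 n hn j hj]
      · left; rw [deg_inl2 n hn i hi]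

theorem stmt13 (n : ℕ) (hn : 4 ≤ n) (ε : ℝ) (h0 : 0 < ε) (h1 : ε ≤ 1) :
    deltaEps ε (Fn n) = ⌊(n : ℝ) - 1 - ε + ε * (⌈((n : ℝ) - 1) / 2⌉ : ℝ)⌋₊ := by
  have hc2 : (n-1)/2 ≤ n - 2 := by omega
  set c := (n-1)/2 with hc
  set d := n - 1 - c with hd
  set X : ℝ := (1-ε) * ((n-1 : ℕ) : ℝ) + ε * ((n - 2 + d : ℕ) : ℝ) with hX
  set S := {x : ℝ | ∃ u v, (Fn n).Adj u v ∧
      x = (1 - ε) * (min (deg (Fn n) u) (deg (Fn n) v) : ℕ) + ε * (max (deg (Fn n) u) (deg (Fn n) v) : ℕ)} with hS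
  have hub : ∀ x ∈ S, x ≤ X := by
    rintro x ⟨u, v, huv, rfl⟩
    have hmin : min (deg (Fn n) u) (deg (Fn n) v) ≤ n - 1 := by
      rcases min_deg_le n hn u v huv with h | h
      · exact le_trans (min_le_left _ _) h
      · exact le_trans (min_le_right _ _) h
    have hmax : max (deg (Fn n) u) (deg (Fn n) v) ≤ n - 2 + d := by
      exact max_le (deg_le_max n hn u) (deg_le_max n hn v)
    have e1 : (0:ℝ) ≤ 1 - ε := by linarith
    have g1 : ((min (deg (Fn n) u) (deg (Fn n) v) : ℕ) : ℝ) ≤ ((n - 1 : ℕ) : ℝ) :=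
      Nat.cast_le.mpr hmin
    have g2 : ((max (deg (Fn n) u) (deg (Fn n) v) : ℕ) : ℝ) ≤ ((n - 2 + d : ℕ) : ℝ) :=
      Nat.cast_le.mpr hmax
    have := mul_le_mul_of_nonneg_left g1 e1
    have := mul_le_mul_of_nonneg_left g2 (le_of_lt h0)
    rw [hX]; linarith
  have hmem : X ∈ S := by
    refine ⟨Sum.inl ⟨1, by omega⟩, Sum.inl ⟨2, by omega⟩, ?_, ?_⟩
    · rw [adj_ll]; simp
    · have e1 : deg (Fn n) (Sum.inl (⟨1, by omega⟩ : Fin n)) = n - 2 + d :=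
        deg_inl1 n hn _ rfl
      have e2 : deg (Fn n) (Sum.inl (⟨2, by omega⟩ : Fin n)) = n - 1 :=
        deg_inl2 n hn _ (by norm_num)
      rw [e1, e2, min_eq_right (by omega), max_eq_left (by omega)]
  have key : sSup S = X := by
    apply le_antisymm
    · exact csSup_le ⟨X, hmem⟩ hub
    · exact le_csSup ⟨X, hub⟩ hmem
  rw [deltaEps, ← hS, key]
  have hceil : (⌈((n:ℝ) - 1) / 2⌉ : ℝ) = ((d : ℕ) : ℝ) := by
    have h1' : ⌈((n:ℝ) - 1) / 2⌉ = (d : ℤ) := by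
      rw [Int.ceil_eq_iff]
      have f1 : n - 1 ≤ 2 * d := by omega
      have f2 : 2 * d ≤ n := by omega
      constructor
      · push_cast
        have : (2 * d : ℝ) ≤ (n : ℝ) := by exact_mod_cast f2
        linarith
      · push_cast
        have : ((n - 1 : ℕ) : ℝ) ≤ (2 * d : ℝ) := by exact_mod_cast f1
        have : ((n:ℝ) - 1) ≤ 2 * d := by
          rw [Nat.cast_sub (by omega)] at this; push_cast at this; linarith
        linarith
    rw [h1']
    push_cast
    ring
  rw [hceil]
  congr 1
  rw [hX]
  have e1 : ((n - 1 : ℕ) : ℝ) = (n:ℝ) - 1 := by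
    rw [Nat.cast_sub (by omega)]; norm_num
  have e2 : ((n - 2 + d : ℕ) : ℝ) = (n:ℝ) - 2 + (d:ℝ) := by
    rw [Nat.cast_add, Nat.cast_sub (by omega)]; norm_num
  rw [e1, e2]
  ring
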